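/- DL-Lite_FR is not closed under KB contraction for any of the eight model-based semantics X^y_z with X ∈ {glob, loc}, y ∈ {atoms, symbols}, z ∈ {⊆, ♯}: for K = {Priest ⊑ Cleric, Cleric ⊑ Renter} (a DL-Lite_core KB) and the single DL-Lite_core TBox assertion N = {Priest ⊑ Renter}, the set of interpretations K ⊖ N obtained by contraction under X^y_z is not equal to Mod(K') for any DL-Lite_FR KB K'. -/
import Mathlib


namespace DLLite

/-- The countably infinite domain of constants. -/
abbrev Δ : Type := ℕ
/-- Countably infinite set of concept names. -/
abbrev ConceptName : Type := ℕ
/-- Countably infinite set of role names. -/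
abbrev RoleName : Type := ℕ

/-- An interpretation assigns a set of domain elements to each concept name
and a binary relation to each role name; constants are interpreted as themselves. -/
structure Interp where
  concept : ConceptName → Set Δ
  role : RoleName → Set (Δ × Δ)

/-- Basic roles: `P` or `P⁻`. -/
inductive BasicRole where
  | pos (P : RoleName)
  | inv (P : RoleName)
deriving DecidableEq

def BasicRole.interp (R : BasicRole) (I : Interp) : Set (Δ × Δ) :=
  match R with
  | .pos P => I.role P
  | .inv P => {p | (p.2, p.1) ∈ I.role P}

/-- Basic concepts: `A` or `∃R`. -/
inductive BasicConcept where
  | atom (A : ConceptName)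
  | ex (R : BasicRole)
deriving DecidableEq

def BasicConcept.interp (B : BasicConcept) (I : Interp) : Set Δ :=
  match B with
  | .atom A => I.concept A
  | .ex R => {o | ∃ o', (o, o') ∈ R.interp I}

/-- DL-Lite_FR assertions: (negative) concept/role inclusions, functionality
assertions, and membership assertions. -/
inductive Assertion where
  | conceptIncl (B1 B2 : BasicConcept)
  | conceptDisj (B1 B2 : BasicConcept)
  | roleIncl (R1 R2 : BasicRole)
  | roleDisj (R1 R2 : BasicRole)
  | funct (R : BasicRole)
  | memberC (A : ConceptName) (a : Δ)
  | memberR (P : RoleName) (a b : Δ)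
deriving DecidableEq

/-- Satisfaction of an assertion by an interpretation. -/
def Interp.sat (I : Interp) : Assertion → Prop
  | .conceptIncl B1 B2 => B1.interp I ⊆ B2.interp I
  | .conceptDisj B1 B2 => B1.interp I ∩ B2.interp I = ∅
  | .roleIncl R1 R2 => R1.interp I ⊆ R2.interp I
  | .roleDisj R1 R2 => R1.interp I ∩ R2.interp I = ∅
  | .funct R => ∀ o o1 o2, (o, o1) ∈ R.interp I → (o, o2) ∈ R.interp I → o1 = o2
  | .memberC A a => a ∈ I.concept A
  | .memberR P a b => (a, b) ∈ I.role P

/-- TBox assertions: inclusion or functionality assertions. -/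
def Assertion.isTBox : Assertion → Prop
  | .memberC _ _ => False
  | .memberR _ _ _ => False
  | _ => True

/-- Membership (ABox) assertions. -/
def Assertion.isMembership : Assertion → Prop
  | .memberC _ _ => True
  | .memberR _ _ _ => True
  | _ => False

/-- The constants occurring in an assertion. -/
def Assertion.constants : Assertion → Set Δ
  | .memberC _ a => {a}
  | .memberR _ a b => {a, b}
  | _ => ∅

/-- A knowledge base: a finite set of assertions (TBox ∪ ABox). -/
abbrev KB := Finset Assertion

/-- The set of models of a KB. -/
def Mod (K : KB) : Set Interp := {I | ∀ a ∈ K, I.sat a}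

/-- Interpretations falsifying at least one assertion of `K`. -/
def NonMod (K : KB) : Set Interp := {I | ∃ a ∈ K, ¬ I.sat a}

/-- The constants occurring in a KB. -/
def KB.constants (K : KB) : Set Δ := ⋃ a ∈ K, Assertion.constants a

/-- Atoms: ground facts `A(o)` or `P(o,o')`. -/
inductive Atom where
  | c (A : ConceptName) (o : Δ)
  | r (P : RoleName) (o o' : Δ)
deriving DecidableEq

/-- The atom set of an interpretation. -/
def Interp.atoms (I : Interp) : Set Atom :=
  fun a => match a with
  | .c A o => o ∈ I.concept A
  | .r P o o' => (o, o') ∈ I.role P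

/-- Concept or role names (symbols). -/
inductive SName where
  | c (A : ConceptName)
  | r (P : RoleName)
deriving DecidableEq

/-- Atom-based set distance: symmetric difference of atom sets. -/
def distASub (I J : Interp) : Set Atom := symmDiff I.atoms J.atoms
/-- Atom-based cardinality distance. -/
noncomputable def distACard (I J : Interp) : ℕ∞ := (symmDiff I.atoms J.atoms).encard
/-- Symbol-based set distance: names interpreted differently. -/
def distSSub (I J : Interp) : Set SName :=
  fun n => match n with
  | .c A => I.concept A ≠ J.concept A
  | .r P => I.role P ≠ J.role P
/-- Symbol-based cardinality distance. -/
noncomputable def distSCard (I J : Interp) : ℕ∞ := (distSSub I J).encard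

/-- Global expansion w.r.t. a distance. -/
def expGlobD {D : Type} [PartialOrder D] (dist : Interp → Interp → D)
    (M N : Set Interp) : Set Interp :=
  {J | J ∈ N ∧ ∃ I ∈ M, ∀ I' ∈ M, ∀ J' ∈ N, ¬ dist I' J' < dist I J}

/-- Local expansion w.r.t. a distance. -/
def expLocD {D : Type} [PartialOrder D] (dist : Interp → Interp → D)
    (M N : Set Interp) : Set Interp :=
  {J | J ∈ N ∧ ∃ I ∈ M, ∀ J' ∈ N, ¬ dist I J' < dist I J}

inductive LocKind | glob | loc
inductive MeasKind | atoms | symbols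
inductive OrdKind | subset | card

/-- The expansion operator on sets of interpretations for each of the
eight model-based semantics `X^y_z`. -/
def expansionSet : LocKind → MeasKind → OrdKind → Set Interp → Set Interp → Set Interp
  | .glob, .atoms, .subset => expGlobD distASub
  | .glob, .atoms, .card => expGlobD distACard
  | .glob, .symbols, .subset => expGlobD distSSub
  | .glob, .symbols, .card => expGlobD distSCard
  | .loc, .atoms, .subset => expLocD distASub
  | .loc, .atoms, .card => expLocD distACard
  | .loc, .symbols, .subset => expLocD distSSub
  | .loc, .symbols, .card => expLocD distSCard

/-- KB expansion `K ⊕ N` under semantics `X^y_z`. -/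
def expandKB (X : LocKind) (y : MeasKind) (z : OrdKind) (K N : KB) : Set Interp :=
  expansionSet X y z (Mod K) (Mod N)

/-- KB contraction `K ⊖ N` under semantics `X^y_z`. -/
def contractKB (X : LocKind) (y : MeasKind) (z : OrdKind) (K N : KB) : Set Interp :=
  Mod K ∪ expansionSet X y z (Mod K) (NonMod N)

/-- Union of two interpretations. -/
def Interp.union (I1 I2 : Interp) : Interp :=
  ⟨fun A => I1.concept A ∪ I2.concept A, fun P => I1.role P ∪ I2.role P⟩

/-- The support set of an interpretation. -/
def Interp.support (I : Interp) : Set Δ :=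
  (⋃ A, I.concept A) ∪ (⋃ P, {o | ∃ o', (o, o') ∈ I.role P ∨ (o', o) ∈ I.role P})

/-- The image `I^f` of an interpretation under an (injective) map `f`. -/
def Interp.image (I : Interp) (f : Δ → Δ) : Interp :=
  ⟨fun A => f '' I.concept A, fun P => (fun p => (f p.1, f p.2)) '' I.role P⟩

/-- `h` is a homomorphism from `I` to `J`. -/
def IsHom (h : Δ → Δ) (I J : Interp) : Prop :=
  (∀ A, h '' I.concept A ⊆ J.concept A) ∧
  (∀ P o o', (o, o') ∈ I.role P → (h o, h o') ∈ J.role P)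

end DLLite

namespace DLLite

def Priest : ConceptName := 0
def Cleric : ConceptName := 1
def Renter : ConceptName := 2

/-- K = {Priest ⊑ Cleric, Cleric ⊑ Renter}, a DL-Lite_core KB with empty ABox. -/
def Kcon : KB :=
  { .conceptIncl (.atom Priest) (.atom Cleric),
    .conceptIncl (.atom Cleric) (.atom Renter) }

/-- N = {Priest ⊑ Renter}, a single DL-Lite_core TBox assertion. -/
def Ncon : KB := { .conceptIncl (.atom Priest) (.atom Renter) }

/-! ### Auxiliary interpretations -/

/-- Model `M*` of `K`: Priest = Cleric = Renter = {0}. -/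
def Mstar : Interp := ⟨fun A => {o | A ≤ 2 ∧ o = 0}, fun _ => ∅⟩
/-- `W2`: Priest = Cleric = {0}, Renter = ∅ (violates `N`, one atom from `M*`). -/
def Wtwo : Interp := ⟨fun A => {o | A ≤ 1 ∧ o = 0}, fun _ => ∅⟩
/-- `W1`: Cleric = Renter = {0} (a model of `K`). -/
def Wone : Interp := ⟨fun A => {o | (A = 1 ∨ A = 2) ∧ o = 0}, fun _ => ∅⟩
/-- `D`: Cleric = {0} (not a model of `K`, but a model of `N`). -/
def Dint : Interp := ⟨fun A => {o | A = 1 ∧ o = 0}, fun _ => ∅⟩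
/-- The empty interpretation. -/
def Zint : Interp := ⟨fun _ => ∅, fun _ => ∅⟩

lemma mem_atoms_c {I : Interp} {A : ConceptName} {o : Δ} :
    Atom.c A o ∈ I.atoms ↔ o ∈ I.concept A := Iff.rfl
lemma mem_atoms_r {I : Interp} {P : RoleName} {o o' : Δ} :
    Atom.r P o o' ∈ I.atoms ↔ (o, o') ∈ I.role P := Iff.rfl

lemma Mstar_concept (A : ConceptName) : Mstar.concept A = {o | A ≤ 2 ∧ o = 0} := rfl
lemma Wtwo_concept (A : ConceptName) : Wtwo.concept A = {o | A ≤ 1 ∧ o = 0} := rfl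
lemma Wone_concept (A : ConceptName) : Wone.concept A = {o | (A = 1 ∨ A = 2) ∧ o = 0} := rfl
lemma Dint_concept (A : ConceptName) : Dint.concept A = {o | A = 1 ∧ o = 0} := rfl
lemma Mstar_role (P : RoleName) : Mstar.role P = ∅ := rfl
lemma Wtwo_role (P : RoleName) : Wtwo.role P = ∅ := rfl
lemma Wone_role (P : RoleName) : Wone.role P = ∅ := rfl
lemma Dint_role (P : RoleName) : Dint.role P = ∅ := rfl

lemma atoms_inj {I J : Interp} (h : I.atoms = J.atoms) : I = J := by
  obtain ⟨c1, r1⟩ := I; obtain ⟨c2, r2⟩ := J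
  simp only [Interp.mk.injEq]
  refine ⟨funext fun A => Set.ext fun o => ?_, funext fun P => Set.ext fun p => ?_⟩
  · exact iff_of_eq (congrFun h (Atom.c A o))
  · have := iff_of_eq (congrFun h (Atom.r P p.1 p.2))
    simpa [Interp.atoms] using this

lemma distASub_eq_empty {I J : Interp} (h : distASub I J = ∅) : I = J := by
  apply atoms_inj
  have : symmDiff I.atoms J.atoms = (⊥ : Set Atom) := h
  exact symmDiff_eq_bot.mp this

lemma distSSub_eq_empty {I J : Interp} (h : distSSub I J = ∅) : I = J := by
  obtain ⟨c1, r1⟩ := I; obtain ⟨c2, r2⟩ := J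
  simp only [Interp.mk.injEq]
  constructor
  · funext A
    by_contra hne
    have : (SName.c A) ∈ distSSub ⟨c1, r1⟩ ⟨c2, r2⟩ := hne
    rw [h] at this; exact this
  · funext P
    by_contra hne
    have : (SName.r P) ∈ distSSub ⟨c1, r1⟩ ⟨c2, r2⟩ := hne
    rw [h] at this; exact this

lemma distASub_Mstar_Wtwo : distASub Mstar Wtwo = {Atom.c 2 0} := by
  ext a
  cases a with
  | c A o =>
    simp only [distASub, Set.mem_symmDiff, mem_atoms_c, Mstar_concept, Wtwo_concept,
      Set.mem_setOf_eq, Set.mem_singleton_iff, Atom.c.injEq]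
    constructor
    · rintro (⟨⟨hA2, rfl⟩, hn⟩ | ⟨⟨hA1, rfl⟩, hn⟩)
      · refine ⟨?_, rfl⟩
        by_contra hne
        exact hn ⟨Nat.lt_succ_iff.mp (lt_of_le_of_ne hA2 hne), rfl⟩
      · exact absurd ⟨hA1.trans (by decide), rfl⟩ hn
    · rintro ⟨rfl, rfl⟩
      exact Or.inl ⟨⟨le_refl _, rfl⟩, fun h => absurd h.1 (by decide)⟩
  | r P o o' =>
    simp only [distASub, Set.mem_symmDiff, mem_atoms_r, Mstar_role, Wtwo_role,
      Set.mem_empty_iff_false, Set.mem_singleton_iff]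
    simp

lemma distSSub_Mstar_Wtwo : distSSub Mstar Wtwo = {SName.c 2} := by
  ext n
  cases n with
  | c A =>
    simp only [Set.mem_singleton_iff, SName.c.injEq]
    show Mstar.concept A ≠ Wtwo.concept A ↔ A = 2
    rw [Mstar_concept, Wtwo_concept]
    constructor
    · intro hne
      by_contra hA2
      apply hne
      ext o
      simp only [Set.mem_setOf_eq]
      exact and_congr_left fun _ =>
        ⟨fun h => Nat.lt_succ_iff.mp (lt_of_le_of_ne h hA2), fun h => h.trans (by decide)⟩
    · rintro rfl
      intro heq
      have : (0 : Δ) ∈ {o : Δ | 2 ≤ 2 ∧ o = 0} := by simp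
      rw [heq] at this
      simp at this
  | r P =>
    constructor
    · intro hmem
      exact absurd (rfl : Mstar.role P = Wtwo.role P) hmem
    · intro hmem
      exact SName.noConfusion hmem

lemma distACard_Mstar_Wtwo : distACard Mstar Wtwo = 1 := by
  have : symmDiff Mstar.atoms Wtwo.atoms = {Atom.c 2 0} := distASub_Mstar_Wtwo
  rw [distACard, this, Set.encard_singleton]

lemma distSCard_Mstar_Wtwo : distSCard Mstar Wtwo = 1 := by
  rw [distSCard, distSSub_Mstar_Wtwo, Set.encard_singleton]

lemma eq_of_lt_A {I J : Interp} (h : distASub I J < distASub Mstar Wtwo) : I = J := by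
  rw [distASub_Mstar_Wtwo] at h
  have hss : distASub I J ⊂ {Atom.c 2 0} := h
  exact distASub_eq_empty (Set.ssubset_singleton_iff.mp hss)

lemma eq_of_lt_S {I J : Interp} (h : distSSub I J < distSSub Mstar Wtwo) : I = J := by
  rw [distSSub_Mstar_Wtwo] at h
  have hss : distSSub I J ⊂ {SName.c 2} := h
  exact distSSub_eq_empty (Set.ssubset_singleton_iff.mp hss)

lemma eq_of_lt_AC {I J : Interp} (h : distACard I J < distACard Mstar Wtwo) : I = J := by
  rw [distACard_Mstar_Wtwo] at h
  have h0 : distACard I J = 0 := ENat.lt_one_iff_eq_zero.mp h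
  have : symmDiff I.atoms J.atoms = ∅ := Set.encard_eq_zero.mp h0
  exact distASub_eq_empty this

lemma eq_of_lt_SC {I J : Interp} (h : distSCard I J < distSCard Mstar Wtwo) : I = J := by
  rw [distSCard_Mstar_Wtwo] at h
  have h0 : distSCard I J = 0 := ENat.lt_one_iff_eq_zero.mp h
  have : distSSub I J = ∅ := Set.encard_eq_zero.mp h0
  exact distSSub_eq_empty this

lemma mem_Kcon_1 : Assertion.conceptIncl (.atom Priest) (.atom Cleric) ∈ Kcon := by
  simp [Kcon]

lemma mem_Kcon_2 : Assertion.conceptIncl (.atom Cleric) (.atom Renter) ∈ Kcon := by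
  simp [Kcon]

lemma modK_not_nonmodN {I : Interp} (hI : I ∈ Mod Kcon) : I ∉ NonMod Ncon := by
  rintro ⟨a, ha, hna⟩
  have haeq : a = Assertion.conceptIncl (.atom Priest) (.atom Renter) := by
    simpa [Ncon] using ha
  subst haeq
  apply hna
  have h1 := hI _ mem_Kcon_1
  have h2 := hI _ mem_Kcon_2
  simp only [Interp.sat, BasicConcept.interp] at h1 h2 ⊢
  exact h1.trans h2

lemma Mstar_mod : Mstar ∈ Mod Kcon := by
  intro a ha
  simp only [Kcon, Finset.mem_insert, Finset.mem_singleton] at ha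
  rcases ha with rfl | rfl <;>
    simp [Interp.sat, BasicConcept.interp, Mstar, Priest, Cleric, Renter]

lemma Wone_mod : Wone ∈ Mod Kcon := by
  intro a ha
  simp only [Kcon, Finset.mem_insert, Finset.mem_singleton] at ha
  rcases ha with rfl | rfl <;>
    simp [Interp.sat, BasicConcept.interp, Wone, Priest, Cleric, Renter]

lemma Zint_mod : Zint ∈ Mod Kcon := by
  intro a ha
  simp only [Kcon, Finset.mem_insert, Finset.mem_singleton] at ha
  rcases ha with rfl | rfl <;>
    simp [Interp.sat, BasicConcept.interp, Zint]

lemma Wtwo_nonmod : Wtwo ∈ NonMod Ncon := by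
  refine ⟨Assertion.conceptIncl (.atom Priest) (.atom Renter), by simp [Ncon], fun h => ?_⟩
  simp only [Interp.sat, BasicConcept.interp] at h
  have h0 : (0 : Δ) ∈ Wtwo.concept Priest := ⟨by decide, rfl⟩
  have h2 : (0 : Δ) ∈ Wtwo.concept Renter := h h0
  exact absurd h2.1 (by decide)

lemma Wtwo_mem_expansion (X : LocKind) (y : MeasKind) (z : OrdKind) :
    Wtwo ∈ expansionSet X y z (Mod Kcon) (NonMod Ncon) := by
  cases X <;> cases y <;> cases z
  case glob.atoms.subset =>
    refine ⟨Wtwo_nonmod, Mstar, Mstar_mod, fun I' hI' J' hJ' hlt => ?_⟩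
    exact modK_not_nonmodN hI' (eq_of_lt_A hlt ▸ hJ')
  case glob.atoms.card =>
    refine ⟨Wtwo_nonmod, Mstar, Mstar_mod, fun I' hI' J' hJ' hlt => ?_⟩
    exact modK_not_nonmodN hI' (eq_of_lt_AC hlt ▸ hJ')
  case glob.symbols.subset =>
    refine ⟨Wtwo_nonmod, Mstar, Mstar_mod, fun I' hI' J' hJ' hlt => ?_⟩
    exact modK_not_nonmodN hI' (eq_of_lt_S hlt ▸ hJ')
  case glob.symbols.card =>
    refine ⟨Wtwo_nonmod, Mstar, Mstar_mod, fun I' hI' J' hJ' hlt => ?_⟩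
    exact modK_not_nonmodN hI' (eq_of_lt_SC hlt ▸ hJ')
  case loc.atoms.subset =>
    refine ⟨Wtwo_nonmod, Mstar, Mstar_mod, fun J' hJ' hlt => ?_⟩
    exact modK_not_nonmodN Mstar_mod (eq_of_lt_A hlt ▸ hJ')
  case loc.atoms.card =>
    refine ⟨Wtwo_nonmod, Mstar, Mstar_mod, fun J' hJ' hlt => ?_⟩
    exact modK_not_nonmodN Mstar_mod (eq_of_lt_AC hlt ▸ hJ')
  case loc.symbols.subset =>
    refine ⟨Wtwo_nonmod, Mstar, Mstar_mod, fun J' hJ' hlt => ?_⟩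
    exact modK_not_nonmodN Mstar_mod (eq_of_lt_S hlt ▸ hJ')
  case loc.symbols.card =>
    refine ⟨Wtwo_nonmod, Mstar, Mstar_mod, fun J' hJ' hlt => ?_⟩
    exact modK_not_nonmodN Mstar_mod (eq_of_lt_SC hlt ▸ hJ')

lemma expansionSet_subset (X : LocKind) (y : MeasKind) (z : OrdKind)
    (M N : Set Interp) : expansionSet X y z M N ⊆ N := by
  cases X <;> cases y <;> cases z <;> exact fun J hJ => hJ.1

lemma Dint_not_mod : Dint ∉ Mod Kcon := by
  intro h
  have h2 := h _ mem_Kcon_2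
  simp only [Interp.sat, BasicConcept.interp] at h2
  have : (0 : Δ) ∈ Dint.concept Renter := h2 (by simp [Dint, Cleric])
  simp [Dint, Renter] at this

lemma Dint_not_nonmod : Dint ∉ NonMod Ncon := by
  rintro ⟨a, ha, hna⟩
  have haeq : a = Assertion.conceptIncl (.atom Priest) (.atom Renter) := by
    simpa [Ncon] using ha
  subst haeq
  apply hna
  simp [Interp.sat, BasicConcept.interp, Dint, Priest]

lemma Dint_concept_nonempty {A : ConceptName} {o : Δ} (h : o ∈ Dint.concept A) :
    A = 1 ∧ o = 0 := h

lemma Dint_basic_nonempty {B : BasicConcept} {o : Δ} (h : o ∈ B.interp Dint) :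
    B = .atom 1 ∧ o = 0 := by
  cases B with
  | atom A =>
    obtain ⟨hA, ho⟩ := Dint_concept_nonempty h
    exact ⟨by rw [hA], ho⟩
  | ex R =>
    exfalso
    obtain ⟨o', ho'⟩ := h
    cases R <;> simpa [BasicRole.interp, Dint] using ho'

/-- DL-Lite_FR is not closed under KB contraction for any of the eight
model-based semantics `X^y_z`. -/
theorem kb_contraction_inexpressible (X : LocKind) (y : MeasKind) (z : OrdKind) :
    ¬ ∃ K' : KB, contractKB X y z Kcon Ncon = Mod K' := by
  rintro ⟨K', hK'⟩
  -- D is not in the contraction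
  have hD : Dint ∉ contractKB X y z Kcon Ncon := by
    rintro (h | h)
    · exact Dint_not_mod h
    · exact Dint_not_nonmod (expansionSet_subset X y z _ _ h)
  -- W1, W2 and the empty interpretation are in the contraction
  have hW1 : Wone ∈ contractKB X y z Kcon Ncon := Or.inl Wone_mod
  have hW2 : Wtwo ∈ contractKB X y z Kcon Ncon := Or.inr (Wtwo_mem_expansion X y z)
  have hZ : Zint ∈ contractKB X y z Kcon Ncon := Or.inl Zint_mod
  rw [hK'] at hD hW1 hW2 hZ
  -- some assertion of K' is falsified by D
  obtain ⟨α, hαK, hα⟩ : ∃ a ∈ K', ¬ Dint.sat a := by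
    by_contra h
    push_neg at h
    exact hD (fun a ha => h a ha)
  have h1 := hW1 α hαK
  have h2 := hW2 α hαK
  have hz := hZ α hαK
  cases α with
  | conceptIncl B1 B2 =>
    simp only [Interp.sat] at hα h1 h2
    rw [Set.not_subset] at hα
    obtain ⟨o, ho1, ho2⟩ := hα
    obtain ⟨hB1, ho⟩ := Dint_basic_nonempty ho1
    subst hB1; subst ho
    cases B2 with
    | atom A' =>
      by_cases hA' : A' = 2
      · subst hA'
        have : (0:Δ) ∈ Wtwo.concept 2 := h2 (by simp [BasicConcept.interp, Wtwo])
        simp [Wtwo] at this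
      · have hA1 : A' ≠ 1 := by
          rintro rfl
          exact ho2 (by simp [BasicConcept.interp, Dint])
        have : (0:Δ) ∈ Wone.concept A' := h1 (by simp [BasicConcept.interp, Wone])
        simp [Wone, hA1, hA'] at this
    | ex R =>
      have : (0:Δ) ∈ (BasicConcept.ex R).interp Wone :=
        h1 (by simp [BasicConcept.interp, Wone])
      obtain ⟨o', ho'⟩ := this
      cases R <;> simpa [BasicRole.interp, Wone] using ho'
  | conceptDisj B1 B2 =>
    simp only [Interp.sat] at hα h1
    rw [Set.eq_empty_iff_forall_notMem] at hα
    push_neg at hα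
    obtain ⟨o, ho1, ho2⟩ := hα
    obtain ⟨hB1, ho⟩ := Dint_basic_nonempty ho1
    obtain ⟨hB2, _⟩ := Dint_basic_nonempty ho2
    subst hB1; subst hB2; subst ho
    rw [Set.eq_empty_iff_forall_notMem] at h1
    apply h1 0
    constructor <;> simp [BasicConcept.interp, Wone]
  | roleIncl R1 R2 =>
    apply hα
    simp only [Interp.sat]
    intro p hp
    exfalso
    cases R1 <;> simpa [BasicRole.interp, Dint] using hp
  | roleDisj R1 R2 =>
    apply hα
    simp only [Interp.sat]
    rw [Set.eq_empty_iff_forall_notMem]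
    rintro p ⟨hp, -⟩
    cases R1 <;> simpa [BasicRole.interp, Dint] using hp
  | funct R =>
    apply hα
    simp only [Interp.sat]
    intro o o1 o2 h1' h2'
    exfalso
    cases R <;> simpa [BasicRole.interp, Dint] using h1'
  | memberC A a =>
    simp only [Interp.sat] at hz
    simp [Zint] at hz
  | memberR P a b =>
    simp only [Interp.sat] at hz
    simp [Zint] at hz

end DLLite
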